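/- Range-conditioned generalized reflection coefficient for the standing-wave case (three layers): under the standing-wave three-layer range-conditioning hypotheses, assume I − R̂23·(β̄21·ā22)·R̂21·(β̄21·ā22) is invertible. Then I − R23·R21 is invertible and R̃32 := R32 + T23·R21·(I − R23·R21)⁻¹·T32 satisfies R̃32 = β̄32 · [ R̂32 + T̂23·(β̄21·ā22)·R̂21·(β̄21·ā22)·(I − R̂23·(β̄21·ā22)·R̂21·(β̄21·ā22))⁻¹·T̂32 ] · β̄32. -/

import Mathlib

open Matrix

lemma diag_comm {A B : Matrix (Fin 2) (Fin 2) ℂ} (hA : A.IsDiag) (hB : B.IsDiag) :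
    A * B = B * A := by
  rw [← hA.diagonal_diag, ← hB.diagonal_diag, diagonal_mul_diagonal,
    diagonal_mul_diagonal]
  exact congrArg diagonal (funext fun i => mul_comm _ _)

/-- Range-conditioned generalized reflection coefficient for the standing-wave case
(three layers): `R̃32 = β̄32 · R̂̃32 · β̄32`. -/
theorem genR32_factorization
    (bB21 aB22 bB32 : Matrix (Fin 2) (Fin 2) ℂ)
    (hbB21 : bB21.IsDiag) (haB22 : aB22.IsDiag) (hbB32 : bB32.IsDiag)
    (hbB21U : IsUnit bB21) (haB22U : IsUnit aB22) (hbB32U : IsUnit bB32)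
    (hatR32 hatR21 hatR23 hatT32 hatT23 : Matrix (Fin 2) (Fin 2) ℂ)
    (R32 R21 R23 T32 T23 : Matrix (Fin 2) (Fin 2) ℂ)
    (eR32 : R32 = bB32 * hatR32 * bB32)
    (eR21 : R21 = bB21 * hatR21 * bB21)
    (eR23 : R23 = aB22 * hatR23 * aB22)
    (eT32 : T32 = aB22 * hatT32 * bB32)
    (eT23 : T23 = bB32 * hatT23 * aB22)
    (hinv : IsUnit (1 - hatR23 * (bB21 * aB22) * hatR21 * (bB21 * aB22)))
    (Rt32 : Matrix (Fin 2) (Fin 2) ℂ)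
    (eRt32 : Rt32 = R32 + T23 * R21 * (1 - R23 * R21)⁻¹ * T32) :
    IsUnit (1 - R23 * R21) ∧
      Rt32 = bB32 *
        (hatR32 + hatT23 * (bB21 * aB22) * hatR21 * (bB21 * aB22) *
          (1 - hatR23 * (bB21 * aB22) * hatR21 * (bB21 * aB22))⁻¹ * hatT32) * bB32 := by
  set N : Matrix (Fin 2) (Fin 2) ℂ :=
    1 - hatR23 * (bB21 * aB22) * hatR21 * (bB21 * aB22) with hN
  have hcomm : aB22 * bB21 = bB21 * aB22 := diag_comm haB22 hbB21
  have haDet : IsUnit aB22.det := (Matrix.isUnit_iff_isUnit_det _).mp haB22U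
  have ha1 : aB22 * aB22⁻¹ = 1 := Matrix.mul_nonsing_inv _ haDet
  have ha2 : aB22⁻¹ * aB22 = 1 := Matrix.nonsing_inv_mul _ haDet
  have hNdet : IsUnit N.det := (Matrix.isUnit_iff_isUnit_det _).mp hinv
  have hN1 : N * N⁻¹ = 1 := Matrix.mul_nonsing_inv _ hNdet
  -- key conjugation identity
  have hA : (1 - R23 * R21) * aB22 = aB22 * N := by
    rw [hN, sub_mul, one_mul, mul_sub, mul_one, eR23, eR21]
    congr 1
    simp only [mul_assoc]
    rw [← mul_assoc aB22 bB21, hcomm, mul_assoc]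
  have hright : (1 - R23 * R21) * (aB22 * N⁻¹ * aB22⁻¹) = 1 := by
    calc (1 - R23 * R21) * (aB22 * N⁻¹ * aB22⁻¹)
        = ((1 - R23 * R21) * aB22) * N⁻¹ * aB22⁻¹ := by
          simp only [mul_assoc]
      _ = aB22 * N * N⁻¹ * aB22⁻¹ := by rw [hA]
      _ = 1 := by rw [mul_assoc aB22 N, hN1, mul_one, ha1]
  have hU : IsUnit (1 - R23 * R21) := by
    rw [Matrix.isUnit_iff_isUnit_det]
    have := congrArg Matrix.det hright
    rw [Matrix.det_mul, Matrix.det_one] at this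
    exact IsUnit.of_mul_eq_one _ this
  refine ⟨hU, ?_⟩
  have hInv : (1 - R23 * R21)⁻¹ = aB22 * N⁻¹ * aB22⁻¹ :=
    Matrix.inv_eq_right_inv hright
  rw [eRt32, hInv, eR32, eR21, eT32, eT23, mul_add, add_mul]
  congr 1
  simp only [mul_assoc]
  rw [← mul_assoc aB22⁻¹ aB22, ha2, one_mul, ← mul_assoc aB22 bB21, hcomm, mul_assoc]
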